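/- Let (K,v) be a valued field of residue characteristic p > 0, a ∈ O_v, c ∈ K with v(c) > 0. If the polynomial X^p + cX − a factors in K[X] as a product of two non-constant polynomials, then the residue of a has a p-th root in the residue field Kv. -/

import Mathlib

open Polynomial

theorem ValuationSubring.integers' {K : Type*} [Field K] (O : ValuationSubring K) :
    Valuation.Integers O.valuation O where
  hom_inj := Subtype.coe_injective
  map_le_one := fun x => O.valuation_le_one x
  exists_of_le_one := fun r hr => ⟨⟨r, O.mem_of_valuation_le_one r hr⟩, rfl⟩

/-- Let `(K, v)` be a valued field of residue characteristic `p > 0`,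
`a ∈ O_v`, and `c ∈ K` with `v(c) > 0` (i.e. `v`-valuation of `c` is `< 1` multiplicatively).
If `X^p + cX − a` factors in `K[X]` as a product of two non-constant polynomials, then the
residue of `a` has a `p`-th root in the residue field `Kv`. -/
theorem residue_has_pth_root_of_factors {K : Type*} [Field K]
    (O : ValuationSubring K) (p : ℕ) [Fact p.Prime]
    [CharP (IsLocalRing.ResidueField O) p]
    (a : K) (ha : a ∈ O) (c : K) (hc : O.valuation c < 1)
    (Q R : Polynomial K) (hQ : 0 < Q.degree) (hR : 0 < R.degree)
    (hfac : X ^ p + C c * X - C a = Q * R) :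
    ∃ b : IsLocalRing.ResidueField O, b ^ p = IsLocalRing.residue O ⟨a, ha⟩ := by
  haveI : IsIntegrallyClosed O := Valuation.Integers.isIntegrallyClosed (O.integers' (K := K))
  have hp : p.Prime := Fact.out
  have hcO : c ∈ O := O.mem_of_valuation_le_one c hc.le
  set f : Polynomial O := X ^ p + (C ⟨c, hcO⟩ * X - C ⟨a, ha⟩) with hfdef
  have hdeglt : (C (⟨c, hcO⟩ : O) * X - C (⟨a, ha⟩ : O)).degree < ((p : ℕ) : WithBot ℕ) := by
    refine lt_of_le_of_lt (degree_sub_le _ _) ?_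
    have h1 : (C (⟨c, hcO⟩ : O) * X).degree ≤ 1 := by
      simpa using degree_linear_le (a := (⟨c, hcO⟩ : O)) (b := 0)
    have h2 : (C (⟨a, ha⟩ : O)).degree ≤ 1 := le_trans (degree_C_le) (by norm_num)
    refine lt_of_le_of_lt (max_le h1 h2) ?_
    exact_mod_cast Nat.one_lt_cast.mpr hp.one_lt
  have hf : f.Monic := monic_X_pow_add hdeglt
  have hmapf : f.map (algebraMap O K) = Q * R := by
    rw [hfdef]
    simp only [Polynomial.map_add, Polynomial.map_sub, Polynomial.map_pow,
      Polynomial.map_mul, Polynomial.map_X, Polynomial.map_C]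
    rw [← hfac]
    ring_nf
    rfl
  have hQ0 : Q ≠ 0 := fun h => by simp [h] at hQ
  have hR0 : R ≠ 0 := fun h => by simp [h] at hR
  obtain ⟨q, hq⟩ := IsIntegrallyClosed.eq_map_mul_C_of_dvd K hf (g := Q) ⟨R, hmapf⟩
  obtain ⟨r, hr⟩ := IsIntegrallyClosed.eq_map_mul_C_of_dvd K hf (g := R)
    ⟨Q, by rw [hmapf, mul_comm]⟩
  have hinj : Function.Injective (algebraMap O K) := Subtype.coe_injective
  have hlc : Q.leadingCoeff * R.leadingCoeff = 1 := by
    have := (hf.map (algebraMap O K)).leadingCoeff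
    rw [hmapf, leadingCoeff_mul] at this
    exact this
  have hQR : Q * R = (q * r).map (algebraMap O K) := by
    rw [Polynomial.map_mul, ← hq, ← hr]
    rw [show q.map (algebraMap O K) * C Q.leadingCoeff * (r.map (algebraMap O K)
      * C R.leadingCoeff) = q.map (algebraMap O K) * r.map (algebraMap O K)
      * (C Q.leadingCoeff * C R.leadingCoeff) by ring, ← C_mul, hlc, C_1, mul_one]
  have hfqr : f = q * r := Polynomial.map_injective _ hinj (by rw [hmapf, hQR])
  have hlcQ : Q.leadingCoeff ≠ 0 := leadingCoeff_ne_zero.mpr hQ0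
  have hlcR : R.leadingCoeff ≠ 0 := leadingCoeff_ne_zero.mpr hR0
  have hdegq : 0 < q.degree := by
    have h : (q.map (algebraMap O K)).degree = Q.degree := by
      rw [← hq, degree_mul, degree_C hlcQ, add_zero]
    rw [degree_map_eq_of_injective hinj] at h
    rw [h]; exact hQ
  have hdegr : 0 < r.degree := by
    have h : (r.map (algebraMap O K)).degree = R.degree := by
      rw [← hr, degree_mul, degree_C hlcR, add_zero]
    rw [degree_map_eq_of_injective hinj] at h
    rw [h]; exact hR
  have hmq : q.Monic := by
    rw [hinj.monic_map_iff, Monic]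
    have := congrArg leadingCoeff hq
    rw [leadingCoeff_mul, leadingCoeff_C] at this
    have h2 : (q.map (algebraMap O K)).leadingCoeff * Q.leadingCoeff * R.leadingCoeff
        = Q.leadingCoeff * R.leadingCoeff := by rw [this]
    rwa [mul_assoc, hlc, mul_one] at h2
  have hmr : r.Monic := by
    rw [hinj.monic_map_iff, Monic]
    have := congrArg leadingCoeff hr
    rw [leadingCoeff_mul, leadingCoeff_C] at this
    have h2 : (r.map (algebraMap O K)).leadingCoeff * R.leadingCoeff * Q.leadingCoeff
        = R.leadingCoeff * Q.leadingCoeff := by rw [this]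
    rwa [mul_assoc, mul_comm R.leadingCoeff, hlc, mul_one] at h2
  -- reduce mod the maximal ideal
  set k := IsLocalRing.ResidueField O
  set φ : O →+* k := IsLocalRing.residue O with hφ
  have hc0 : φ ⟨c, hcO⟩ = 0 := by
    rw [hφ]
    exact Ideal.Quotient.eq_zero_iff_mem.mpr ((O.valuation_lt_one_iff ⟨c, hcO⟩).mpr hc)
  have hmapφ : f.map φ = X ^ p - C (φ ⟨a, ha⟩) := by
    rw [hfdef]
    simp [hc0]
    ring
  have hfactk : X ^ p - C (φ ⟨a, ha⟩) = q.map φ * r.map φ := by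
    rw [← hmapφ, hfqr, Polynomial.map_mul]
  by_contra hcon
  push_neg at hcon
  have hirr : Irreducible (X ^ p - C (φ ⟨a, ha⟩)) :=
    (X_pow_sub_C_irreducible_iff_of_prime hp).mpr fun b => hcon b
  rcases hirr.isUnit_or_isUnit hfactk with h | h
  · rw [isUnit_iff_degree_eq_zero, hmq.degree_map φ] at h
    exact absurd h (by rw [h] at hdegq; exact absurd hdegq (lt_irrefl _) )
  · rw [isUnit_iff_degree_eq_zero, hmr.degree_map φ] at h
    rw [h] at hdegr; exact absurd hdegr (lt_irrefl _)
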